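/- There exists a constant C > 0 such that for all real numbers x, y ≥ 0, one has |x² log(x²) − y² log(y²)| ≤ C (1 + x² + y²) |x − y|, where the expression t log(t) is interpreted as 0 when t = 0. -/
import Mathlib

open Real

private lemma xlogx_bound {x : ℝ} (hx : 0 < x) (hx1 : x ≤ 1) : |x * Real.log x| ≤ 1 := by
  have h := Real.abs_log_mul_self_lt x hx hx1
  calc |x * Real.log x| = |Real.log x * x| := by rw [mul_comm]
  _ ≤ 1 := le_of_lt h

private lemma key (x y : ℝ) (hy : 0 ≤ y) (hxy : y ≤ x) :
    |x ^ 2 * Real.log (x ^ 2) - y ^ 2 * Real.log (y ^ 2)| ≤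
      8 * (1 + x ^ 2 + y ^ 2) * (x - y) := by
  have hx : 0 ≤ x := hy.trans hxy
  rcases hy.eq_or_lt with hy0 | hy0
  · -- y = 0
    subst hy0
    simp only [ne_eq, OfNat.ofNat_ne_zero, not_false_eq_true, zero_pow, zero_mul, sub_zero]
    rcases hx.eq_or_lt with hx0 | hx0
    · subst hx0; simp
    · have hlx : Real.log (x ^ 2) = 2 * Real.log x := by
        rw [Real.log_pow]; push_cast; ring
      rcases le_total x 1 with hx1 | hx1
      · have hb := xlogx_bound hx0 hx1
        have hlneg : Real.log x ≤ 0 := Real.log_nonpos (le_of_lt hx0) hx1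
        have hb' : x * (-Real.log x) ≤ 1 := by
          have : |x * Real.log x| = x * (-Real.log x) := by
            rw [abs_of_nonpos (mul_nonpos_of_nonneg_of_nonpos (le_of_lt hx0) hlneg)]; ring
          linarith [this ▸ hb]
        rw [hlx, abs_of_nonpos (by nlinarith)]
        nlinarith [sq_nonneg x, mul_nonneg (le_of_lt hx0) (neg_nonneg.2 hlneg)]
      · have hl0 : 0 ≤ Real.log x := Real.log_nonneg hx1
        have hlle : Real.log x ≤ x - 1 := Real.log_le_sub_one_of_pos hx0
        rw [hlx, abs_of_nonneg (by nlinarith)]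
        nlinarith [sq_nonneg x]
  · -- 0 < y ≤ x
    have hx0 : 0 < x := lt_of_lt_of_le hy0 hxy
    have hlx : Real.log (x ^ 2) = 2 * Real.log x := by rw [Real.log_pow]; push_cast; ring
    have hly : Real.log (y ^ 2) = 2 * Real.log y := by rw [Real.log_pow]; push_cast; ring
    have hld : y * (Real.log x - Real.log y) ≤ x - y := by
      have h1 : Real.log x - Real.log y = Real.log (x / y) := (Real.log_div (ne_of_gt hx0) (ne_of_gt hy0)).symm
      have h2 : Real.log (x / y) ≤ x / y - 1 := Real.log_le_sub_one_of_pos (div_pos hx0 hy0)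
      have h3 : y * (x / y - 1) = x - y := by field_simp
      nlinarith [h2, h1]
    have hld0 : 0 ≤ Real.log x - Real.log y := by
      have := Real.log_le_log hy0 hxy
      linarith
    have hA : x ^ 2 * Real.log (x ^ 2) - y ^ 2 * Real.log (y ^ 2) =
        (x ^ 2 - y ^ 2) * (2 * Real.log x) + y ^ 2 * (2 * (Real.log x - Real.log y)) := by
      rw [hlx, hly]; ring
    rw [hA]
    have h2 : |y ^ 2 * (2 * (Real.log x - Real.log y))| ≤ 2 * y * (x - y) := by
      rw [abs_of_nonneg (by positivity)]
      nlinarith [hld, hy0.le]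
    have h1 : |(x ^ 2 - y ^ 2) * (2 * Real.log x)| ≤ 6 * (1 + x ^ 2 + y ^ 2) * (x - y) := by
      rcases le_total x 1 with hx1 | hx1
      · have hb := xlogx_bound hx0 hx1
        have hlneg : Real.log x ≤ 0 := Real.log_nonpos (le_of_lt hx0) hx1
        have hb' : x * (-Real.log x) ≤ 1 := by
          have : |x * Real.log x| = x * (-Real.log x) := by
            rw [abs_of_nonpos (mul_nonpos_of_nonneg_of_nonpos (le_of_lt hx0) hlneg)]; ring
          linarith [this ▸ hb]
        rw [abs_of_nonpos (mul_nonpos_of_nonneg_of_nonpos (by nlinarith) (by linarith))]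
        -- -(x^2-y^2)*2*log x = 2(x+y)(x-y)(-log x) ≤ 4x(x-y)(-log x) ≤ 4(x-y)
        nlinarith [mul_nonneg (sub_nonneg.2 hxy) (neg_nonneg.2 hlneg),
          mul_le_mul_of_nonneg_left hb' (sub_nonneg.2 hxy),
          mul_nonneg (mul_nonneg hy (sub_nonneg.2 hxy)) (neg_nonneg.2 hlneg),
          sq_nonneg x, sq_nonneg y, sq_nonneg (x - y)]
      · have hl0 : 0 ≤ Real.log x := Real.log_nonneg hx1
        have hlle : Real.log x ≤ x - 1 := Real.log_le_sub_one_of_pos hx0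
        rw [abs_of_nonneg (mul_nonneg (by nlinarith) (by linarith))]
        nlinarith [sq_nonneg (x - y), sq_nonneg (x + y), mul_nonneg (sub_nonneg.2 hxy) hl0,
          mul_le_mul_of_nonneg_left hlle (sub_nonneg.2 hxy), sq_nonneg x, sq_nonneg y]
    calc |(x ^ 2 - y ^ 2) * (2 * Real.log x) + y ^ 2 * (2 * (Real.log x - Real.log y))|
        ≤ |(x ^ 2 - y ^ 2) * (2 * Real.log x)| + |y ^ 2 * (2 * (Real.log x - Real.log y))| :=
          abs_add_le _ _
      _ ≤ 6 * (1 + x ^ 2 + y ^ 2) * (x - y) + 2 * y * (x - y) := add_le_add h1 h2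
      _ ≤ 8 * (1 + x ^ 2 + y ^ 2) * (x - y) := by nlinarith [sq_nonneg (y - 1), sub_nonneg.2 hxy, sq_nonneg x]

theorem abs_sq_log_sq_sub_le :
    ∃ C > 0, ∀ x y : ℝ, 0 ≤ x → 0 ≤ y →
      |x ^ 2 * Real.log (x ^ 2) - y ^ 2 * Real.log (y ^ 2)| ≤
        C * (1 + x ^ 2 + y ^ 2) * |x - y| := by
  refine ⟨8, by norm_num, fun x y hx hy => ?_⟩
  rcases le_total y x with h | h
  · rw [abs_of_nonneg (sub_nonneg.2 h)]
    exact key x y hy h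
  · rw [abs_sub_comm, abs_sub_comm x y, abs_of_nonneg (sub_nonneg.2 h)]
    have := key y x hx h
    calc |y ^ 2 * Real.log (y ^ 2) - x ^ 2 * Real.log (x ^ 2)|
        ≤ 8 * (1 + y ^ 2 + x ^ 2) * (y - x) := this
      _ = 8 * (1 + x ^ 2 + y ^ 2) * (y - x) := by ring
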